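/- Let X be a complete geodesic metric space for which there exists a quasi-isometry from X to a simplicial tree. Then there exists δ > 0 such that X is δ-hyperbolic, i.e. (x,y)_w ≥ min{(x,z)_w,(y,z)_w} − δ for all x,y,z,w ∈ X. -/

import Mathlib

open SimpleGraph

section TreeLemmas

variable {V : Type} [DecidableEq V] {T : SimpleGraph V}

/-- In an acyclic graph, the support of any path is contained in the support of
any walk with the same endpoints. -/
lemma path_support_subset (hT : T.IsAcyclic) {u v : V} {P W : T.Walk u v}
    (hP : P.IsPath) : P.support ⊆ W.support := by
  have h : (⟨P, hP⟩ : T.Path u v) = ⟨W.bypass, W.bypass_isPath⟩ := hT.path_unique _ _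
  have h2 : P = W.bypass := congrArg Subtype.val h
  rw [h2]
  exact W.support_bypass_subset

/-- Chain lemma: a chain with steps of tree-distance at most `M` passes within `M`
of every vertex on a path between its endpoints. -/
lemma chain_lemma (hT : T.IsTree) (g : ℕ → V) (M : ℕ) (n : ℕ)
    (hstep : ∀ i < n, T.dist (g i) (g (i + 1)) ≤ M)
    {p : V} {P : T.Walk (g 0) (g n)} (hP : P.IsPath) (hp : p ∈ P.support) :
    ∃ i ≤ n, T.dist (g i) p ≤ M := by
  induction n with
  | zero =>
    rw [SimpleGraph.Walk.isPath_iff_eq_nil.mp hP] at hp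
    simp only [SimpleGraph.Walk.support_nil, List.mem_singleton] at hp
    exact ⟨0, le_refl 0, by simp [hp, SimpleGraph.dist_self]⟩
  | succ n ih =>
    obtain ⟨Q, hQl⟩ := hT.isConnected.exists_walk_length_eq_dist (g n) (g (n + 1))
    obtain ⟨R, hRpath, _⟩ := hT.isConnected.exists_path_of_dist (g 0) (g n)
    have hsub := path_support_subset (W := R.append Q) hT.IsAcyclic hP
    have hmem := hsub hp
    rw [SimpleGraph.Walk.mem_support_append_iff] at hmem
    rcases hmem with hmem | hmem
    · obtain ⟨i, hi, hd⟩ := ih (fun i hi => hstep i (Nat.lt_succ_of_lt hi)) hRpath hmem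
      exact ⟨i, Nat.le_succ_of_le hi, hd⟩
    · refine ⟨n, Nat.le_succ n, ?_⟩
      calc T.dist (g n) p ≤ (Q.takeUntil p hmem).length := SimpleGraph.dist_le _
        _ ≤ Q.length := SimpleGraph.Walk.length_takeUntil_le Q hmem
        _ = T.dist (g n) (g (n + 1)) := hQl
        _ ≤ M := hstep n (Nat.lt_succ_self n)

/-- Crossing lemma: among the two "crossing" pairings of four vertices of a tree,
one has its two paths coming within distance 1 of each other. -/
lemma crossing (hT : T.IsTree) {a b c e : V}
    {Pac : T.Walk a c} (h1 : Pac.IsPath)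
    {Pbe : T.Walk b e} (h2 : Pbe.IsPath)
    {Pae : T.Walk a e} (h3 : Pae.IsPath)
    {Pbc : T.Walk b c} (h4 : Pbc.IsPath) :
    (∃ p q, p ∈ Pac.support ∧ q ∈ Pbe.support ∧ T.dist p q ≤ 1) ∨
    (∃ p q, p ∈ Pae.support ∧ q ∈ Pbc.support ∧ T.dist p q ≤ 1) := by
  -- fact C : every vertex of the path from b to a lies on Pbc or on Pac
  have factC : ∀ v ∈ ((Pbc.append Pac.reverse).bypass).support,
      v ∈ Pbc.support ∨ v ∈ Pac.support := by
    intro v hv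
    have h := SimpleGraph.Walk.support_bypass_subset _ hv
    rw [SimpleGraph.Walk.mem_support_append_iff] at h
    rcases h with h | h
    · exact Or.inl h
    · right
      rwa [SimpleGraph.Walk.support_reverse, List.mem_reverse] at h
  -- fact A : every vertex of Pbe lies on the path from b to a, or on Pae
  have factA : ∀ v ∈ Pbe.support,
      v ∈ ((Pbc.append Pac.reverse).bypass).support ∨ v ∈ Pae.support := by
    intro v hv
    have hsub := path_support_subset
      (W := ((Pbc.append Pac.reverse).bypass).append Pae) hT.IsAcyclic h2
    have h := hsub hv
    rwa [SimpleGraph.Walk.mem_support_append_iff] at h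
  suffices h : ∀ (b' e' : V) (R : T.Walk b' e'), e' = e →
      (∀ v ∈ R.support, v ∈ Pbe.support) → b' ∈ Pbc.support →
      ((∃ p q, p ∈ Pac.support ∧ q ∈ Pbe.support ∧ T.dist p q ≤ 1) ∨
       (∃ p q, p ∈ Pae.support ∧ q ∈ Pbc.support ∧ T.dist p q ≤ 1)) by
    exact h b e Pbe rfl (fun _ hv => hv) Pbc.start_mem_support
  intro b' e' R
  induction R with
  | nil =>
    rintro rfl _ hb'
    exact Or.inr ⟨_, _, Pae.end_mem_support, hb', by simp [SimpleGraph.dist_self]⟩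
  | @cons b' v' e' hadj R' ih =>
    rintro rfl hRsup hb'
    by_cases hv' : v' ∈ Pbc.support
    · exact ih rfl (fun v hv => hRsup v (by simp [SimpleGraph.Walk.support_cons, hv])) hv'
    · have hv'be : v' ∈ Pbe.support :=
        hRsup v' (by simp [SimpleGraph.Walk.support_cons, R'.start_mem_support])
      have hdist1 : T.dist v' b' ≤ 1 :=
        le_of_eq (SimpleGraph.dist_eq_one_iff_adj.mpr hadj.symm)
      rcases factA v' hv'be with hA | hA
      · rcases factC v' hA with h | h
        · exact absurd h hv'
        · exact Or.inl ⟨v', v', h, hv'be, by simp [SimpleGraph.dist_self]⟩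
      · exact Or.inr ⟨v', b', hA, hb', hdist1⟩

end TreeLemmas

section Geodesic

variable {X : Type} [MetricSpace X] {V : Type} [DecidableEq V] {T : SimpleGraph V}

/-- Main geometric lemma: if `p` lies on a path between `f x` and `f z` in the tree,
then some point `u` on a geodesic from `x` to `z` has `f u` close to `p`. -/
lemma geodesic_near (hT : T.IsTree)
    (hgeo : ∀ x y : X, ∃ σ : ℝ → X, σ 0 = x ∧ σ (dist x y) = y ∧
      ∀ s ∈ Set.Icc (0:ℝ) (dist x y), ∀ t ∈ Set.Icc (0:ℝ) (dist x y),
        dist (σ s) (σ t) = |s - t|)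
    (f : X → V) (K C : ℝ) (hK : 1 ≤ K) (hC : 0 ≤ C)
    (hup : ∀ x₁ x₂ : X, (T.dist (f x₁) (f x₂) : ℝ) ≤ K * dist x₁ x₂ + C)
    (x z : X) {P : T.Walk (f x) (f z)} (hP : P.IsPath) {p : V} (hp : p ∈ P.support) :
    ∃ u : X, dist x u + dist u z = dist x z ∧ (T.dist (f u) p : ℝ) ≤ K + C + 1 := by
  obtain ⟨σ, hσ0, hσL, hσd⟩ := hgeo x z
  have hL : (0:ℝ) ≤ dist x z := dist_nonneg
  set L : ℝ := dist x z with hLdef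
  set n : ℕ := ⌈L⌉₊ with hn
  have hmem : ∀ i : ℕ, min (i : ℝ) L ∈ Set.Icc (0:ℝ) L :=
    fun i => ⟨le_min (Nat.cast_nonneg i) hL, min_le_right _ _⟩
  -- consecutive sample points are at distance at most 1
  have hstepX : ∀ i : ℕ,
      dist (σ (min (i : ℝ) L)) (σ (min ((i + 1 : ℕ) : ℝ) L)) ≤ 1 := by
    intro i
    have h1 := hσd _ (hmem i) _ (hmem (i + 1))
    rw [h1]
    have hcast : ((i + 1 : ℕ) : ℝ) = (i : ℝ) + 1 := by push_cast; ring
    have hle : min (i : ℝ) L ≤ min ((i : ℝ) + 1) L :=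
      min_le_min (by linarith) le_rfl
    have hle2 : min ((i : ℝ) + 1) L ≤ min (i : ℝ) L + 1 := by
      rcases le_total ((i : ℝ) + 1) L with h | h
      · rw [min_eq_left h, min_eq_left (by linarith)]
      · rcases le_total (i : ℝ) L with h2 | h2
        · rw [min_eq_right h, min_eq_left h2]; linarith
        · rw [min_eq_right h, min_eq_right h2]; linarith
    rw [hcast, abs_le]
    constructor <;> linarith
  -- sample points lie between x and z
  have hbetween : ∀ i : ℕ,
      dist x (σ (min (i : ℝ) L)) + dist (σ (min (i : ℝ) L)) z = dist x z := by
    intro i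
    have hx : dist x (σ (min (i : ℝ) L)) = min (i : ℝ) L := by
      conv_lhs => rw [← hσ0]
      rw [hσd 0 ⟨le_refl 0, hL⟩ _ (hmem i), abs_sub_comm, sub_zero,
        abs_of_nonneg (hmem i).1]
    have hz : dist (σ (min (i : ℝ) L)) z = L - min (i : ℝ) L := by
      conv_lhs => rw [← hσL]
      rw [hσd _ (hmem i) L ⟨hL, le_refl L⟩, abs_of_nonpos (by linarith [(hmem i).2])]
      ring
    rw [hx, hz, ← hLdef]; ring
  -- the image chain
  set g : ℕ → V := fun i => f (σ (min (i : ℝ) L)) with hg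
  set M : ℕ := ⌈K + C⌉₊ with hM
  have hstepT : ∀ i < n, T.dist (g i) (g (i + 1)) ≤ M := by
    intro i _
    have h1 : (T.dist (g i) (g (i + 1)) : ℝ) ≤
        K * dist (σ (min (i : ℝ) L)) (σ (min ((i + 1 : ℕ) : ℝ) L)) + C := hup _ _
    have h2 : K * dist (σ (min (i : ℝ) L)) (σ (min ((i + 1 : ℕ) : ℝ) L)) + C ≤ K + C := by
      have := hstepX i
      nlinarith [dist_nonneg (x := σ (min (i : ℝ) L)) (y := σ (min ((i + 1 : ℕ) : ℝ) L))]
    have h3 : (T.dist (g i) (g (i + 1)) : ℝ) ≤ (M : ℝ) :=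
      le_trans (le_trans h1 h2) (Nat.le_ceil _)
    exact_mod_cast h3
  have he0 : f x = g 0 := by
    have : σ (min ((0 : ℕ) : ℝ) L) = x := by
      rw [Nat.cast_zero, min_eq_left hL, hσ0]
    rw [hg]; simp only [this]
  have hen : f z = g n := by
    have : σ (min ((n : ℕ) : ℝ) L) = z := by
      rw [min_eq_right (Nat.le_ceil L), hσL]
    rw [hg]; simp only [this]
  have hp' : p ∈ (P.copy he0 hen).support := by
    rwa [SimpleGraph.Walk.support_copy]
  obtain ⟨i, _, hi⟩ := chain_lemma hT g M n hstepT (by simpa using hP) hp'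
  refine ⟨σ (min (i : ℝ) L), hbetween i, ?_⟩
  have hMle : (M : ℝ) ≤ K + C + 1 := by
    rw [hM]
    exact le_of_lt (Nat.ceil_lt_add_one (by linarith))
  have hcast : (T.dist (g i) p : ℝ) ≤ (M : ℝ) := by exact_mod_cast hi
  exact le_trans hcast hMle

end Geodesic

/-- a complete geodesic metric space quasi-isometric to a simplicial tree
is δ-hyperbolic for some δ > 0. -/
theorem stmt_3 (X : Type) [MetricSpace X] [CompleteSpace X]
    -- X is geodesic
    (hgeo : ∀ x y : X, ∃ σ : ℝ → X, σ 0 = x ∧ σ (dist x y) = y ∧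
      ∀ s ∈ Set.Icc (0:ℝ) (dist x y), ∀ t ∈ Set.Icc (0:ℝ) (dist x y),
        dist (σ s) (σ t) = |s - t|)
    -- there is a quasi-isometry from X to a simplicial tree
    (hqt : ∃ (V : Type) (T : SimpleGraph V), T.IsTree ∧
      ∃ (f : X → V) (K C : ℝ), 1 ≤ K ∧ 0 ≤ C ∧
        (∀ x₁ x₂ : X, dist x₁ x₂ / K - C ≤ (T.dist (f x₁) (f x₂) : ℝ) ∧
          (T.dist (f x₁) (f x₂) : ℝ) ≤ K * dist x₁ x₂ + C) ∧
        (∀ v : V, ∃ x : X, (T.dist v (f x) : ℝ) ≤ C)) :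
    ∃ δ : ℝ, 0 < δ ∧
      ∀ x y z w : X,
        min ((dist x w + dist z w - dist x z) / 2)
            ((dist y w + dist z w - dist y z) / 2) - δ
          ≤ (dist x w + dist y w - dist x y) / 2 := by
  obtain ⟨V, T, hT, f, K, C, hK, hC, hbd, _⟩ := hqt
  haveI : DecidableEq V := Classical.decEq V
  have hKpos : 0 < K := lt_of_lt_of_le zero_lt_one hK
  have hup : ∀ x₁ x₂ : X, (T.dist (f x₁) (f x₂) : ℝ) ≤ K * dist x₁ x₂ + C :=
    fun x₁ x₂ => (hbd x₁ x₂).2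
  have hpull : ∀ x₁ x₂ : X, dist x₁ x₂ ≤ K * ((T.dist (f x₁) (f x₂) : ℝ) + C) := by
    intro x₁ x₂
    have h := (hbd x₁ x₂).1
    have h2 : dist x₁ x₂ / K ≤ (T.dist (f x₁) (f x₂) : ℝ) + C := by linarith
    calc dist x₁ x₂ = K * (dist x₁ x₂ / K) := by field_simp
      _ ≤ K * ((T.dist (f x₁) (f x₂) : ℝ) + C) :=
          mul_le_mul_of_nonneg_left h2 (le_of_lt hKpos)
  refine ⟨K * (2 * K + 3 * C + 3), by nlinarith, ?_⟩
  intro x y z w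
  set δ : ℝ := K * (2 * K + 3 * C + 3) with hδ
  obtain ⟨Pac, hPac, _⟩ := hT.isConnected.exists_path_of_dist (f x) (f z)
  obtain ⟨Pbe, hPbe, _⟩ := hT.isConnected.exists_path_of_dist (f y) (f w)
  obtain ⟨Pae, hPae, _⟩ := hT.isConnected.exists_path_of_dist (f x) (f w)
  obtain ⟨Pbc, hPbc, _⟩ := hT.isConnected.exists_path_of_dist (f y) (f z)
  rcases crossing hT hPac hPbe hPae hPbc with ⟨p, q, hp, hq, hpq⟩ | ⟨p, q, hp, hq, hpq⟩
  · -- p on path f x → f z, q on path f y → f w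
    obtain ⟨u, hub, hud⟩ := geodesic_near hT hgeo f K C hK hC hup x z hPac hp
    obtain ⟨v, hvb, hvd⟩ := geodesic_near hT hgeo f K C hK hC hup y w hPbe hq
    have htri : (T.dist (f u) (f v) : ℝ) ≤ 2 * K + 2 * C + 3 := by
      have t1 : T.dist (f u) (f v) ≤ T.dist (f u) p + T.dist p (f v) :=
        hT.isConnected.dist_triangle
      have t2 : T.dist p (f v) ≤ T.dist p q + T.dist q (f v) :=
        hT.isConnected.dist_triangle
      have t3 : T.dist (f u) (f v) ≤ T.dist (f u) p + T.dist p q + T.dist q (f v) := by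
        omega
      have c1 : (T.dist (f u) (f v) : ℝ) ≤
          (T.dist (f u) p : ℝ) + (T.dist p q : ℝ) + (T.dist q (f v) : ℝ) := by
        exact_mod_cast t3
      have hqv : (T.dist q (f v) : ℝ) ≤ K + C + 1 := by
        rw [SimpleGraph.dist_comm]; exact hvd
      have hpq' : (T.dist p q : ℝ) ≤ 1 := by exact_mod_cast hpq
      linarith
    have huv : dist u v ≤ δ := by
      calc dist u v ≤ K * ((T.dist (f u) (f v) : ℝ) + C) := hpull u v
        _ ≤ K * (2 * K + 2 * C + 3 + C) :=
            mul_le_mul_of_nonneg_left (by linarith) (le_of_lt hKpos)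
        _ = δ := by rw [hδ]; ring
    have hmin : min ((dist x w + dist z w - dist x z) / 2)
        ((dist y w + dist z w - dist y z) / 2)
        ≤ (dist x w + dist z w - dist x z) / 2 := min_le_left _ _
    have tri1 : dist x y ≤ dist x u + dist u y := dist_triangle x u y
    have tri2 : dist u y ≤ dist u v + dist v y := dist_triangle u v y
    have tri3 : dist z w ≤ dist z u + dist u w := dist_triangle z u w
    have tri4 : dist u w ≤ dist u v + dist v w := dist_triangle u v w
    have c1 : dist z u = dist u z := dist_comm z u
    have c2 : dist v y = dist y v := dist_comm v y
    linarith
  · -- p on path f x → f w, q on path f y → f z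
    obtain ⟨u, hub, hud⟩ := geodesic_near hT hgeo f K C hK hC hup x w hPae hp
    obtain ⟨v, hvb, hvd⟩ := geodesic_near hT hgeo f K C hK hC hup y z hPbc hq
    have htri : (T.dist (f u) (f v) : ℝ) ≤ 2 * K + 2 * C + 3 := by
      have t1 : T.dist (f u) (f v) ≤ T.dist (f u) p + T.dist p (f v) :=
        hT.isConnected.dist_triangle
      have t2 : T.dist p (f v) ≤ T.dist p q + T.dist q (f v) :=
        hT.isConnected.dist_triangle
      have t3 : T.dist (f u) (f v) ≤ T.dist (f u) p + T.dist p q + T.dist q (f v) := by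
        omega
      have c1 : (T.dist (f u) (f v) : ℝ) ≤
          (T.dist (f u) p : ℝ) + (T.dist p q : ℝ) + (T.dist q (f v) : ℝ) := by
        exact_mod_cast t3
      have hqv : (T.dist q (f v) : ℝ) ≤ K + C + 1 := by
        rw [SimpleGraph.dist_comm]; exact hvd
      have hpq' : (T.dist p q : ℝ) ≤ 1 := by exact_mod_cast hpq
      linarith
    have huv : dist u v ≤ δ := by
      calc dist u v ≤ K * ((T.dist (f u) (f v) : ℝ) + C) := hpull u v
        _ ≤ K * (2 * K + 2 * C + 3 + C) :=
            mul_le_mul_of_nonneg_left (by linarith) (le_of_lt hKpos)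
        _ = δ := by rw [hδ]; ring
    have hmin : min ((dist x w + dist z w - dist x z) / 2)
        ((dist y w + dist z w - dist y z) / 2)
        ≤ (dist y w + dist z w - dist y z) / 2 := min_le_right _ _
    have tri1 : dist x y ≤ dist x u + dist u y := dist_triangle x u y
    have tri2 : dist u y ≤ dist u v + dist v y := dist_triangle u v y
    have tri3 : dist z w ≤ dist z v + dist v w := dist_triangle z v w
    have tri4 : dist v w ≤ dist v u + dist u w := dist_triangle v u w
    have c1 : dist v y = dist y v := dist_comm v y
    have c2 : dist z v = dist v z := dist_comm z v
    have c3 : dist v u = dist u v := dist_comm v u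
    linarith
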